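/- Let M be a finite monoid with idempotent exponent ω satisfying m * n^ω = n^ω = n^ω * m whenever m ⊑ n. Then for every n ∈ M and every factorization n = n_1 * ... * n_r, and every subset S ⊆ {1,...,r}, the product of (n_i for i ∈ S, in increasing order of i) m satisfies n^ω * m = n^ω. -/

import Mathlib

def Subword {M : Type*} [Monoid M] (m n : M) : Prop :=
  ∃ (ps : List (M × M)) (last : M),
    n = (ps.map fun p => p.1 * p.2).prod * last ∧ m = (ps.map Prod.snd).prod

theorem stmt_18 (M : Type*) [Monoid M] [Fintype M] (ω : ℕ) (hω : 0 < ω)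
    (hid : ∀ x : M, IsIdempotentElem (x ^ ω))
    (hyp : ∀ m n : M, Subword m n → m * n ^ ω = n ^ ω ∧ n ^ ω * m = n ^ ω) :
    ∀ (ns ms : List M), ms.Sublist ns →
      ns.prod ^ ω * ms.prod = ns.prod ^ ω := by
  have key : ∀ {ms ns : List M}, ms.Sublist ns → Subword ms.prod ns.prod := by
    intro ms ns h
    induction h with
    | slnil => exact ⟨[], 1, by simp, by simp⟩
    | cons a h ih =>
      obtain ⟨ps, last, hn, hm⟩ := ih
      cases ps with
      | nil =>
        refine ⟨[], a * last, ?_, hm⟩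
        simp only [List.map_nil, List.prod_nil, one_mul] at hn ⊢
        simp [List.prod_cons, hn]
      | cons p rest =>
        refine ⟨(a * p.1, p.2) :: rest, last, ?_, by simpa using hm⟩
        simp only [List.map_cons, List.prod_cons] at hn ⊢
        simp [hn, mul_assoc]
    | cons_cons a h ih =>
      obtain ⟨ps, last, hn, hm⟩ := ih
      exact ⟨(1, a) :: ps, last, by simp [List.prod_cons, hn, mul_assoc],
        by simp [List.prod_cons, hm]⟩
  intro ns ms h
  exact (hyp ms.prod ns.prod (key h)).2
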